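/- Let η be a positive equivalence relation such that at least one η-family is finitely learnable. Then there is an η-family that is confidently learnable but not finitely learnable. -/

import Mathlib

namespace PEL

/-- Evaluation of the `e`-th partial recursive function (via the standard
numbering of `Nat.Partrec.Code`). -/
def evalCode (e : ℕ) (x : ℕ) : Part ℕ :=
  (Denumerable.ofNat Nat.Partrec.Code e).eval x

/-- The `e`-th recursively enumerable set `W_e = dom φ_e`. -/
def W (e : ℕ) : Set ℕ := {x | (evalCode e x).Dom}

/-- A set is r.e. iff it equals some `W_e`. -/
def RESet (S : Set ℕ) : Prop := ∃ e, W e = S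

/-- A positive equivalence relation: an r.e. equivalence relation on ℕ
with infinitely many equivalence classes. -/
structure PosEq where
  rel : ℕ → ℕ → Prop
  equiv : Equivalence rel
  re : ∃ e, ∀ x y, rel x y ↔ Nat.pair x y ∈ W e
  classes_infinite : (Set.range fun x => {y | rel x y}).Infinite

/-- The η-equivalence class of `x`. -/
def classOf (η : PosEq) (x : ℕ) : Set ℕ := {y | η.rel x y}

/-- A set is η-closed iff it is a union of η-equivalence classes. -/
def EtaClosed (η : PosEq) (S : Set ℕ) : Prop := ∀ x ∈ S, classOf η x ⊆ S

/-- A set is η-finite iff it is a union of finitely many η-equivalence classes. -/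
def EtaFinite (η : PosEq) (S : Set ℕ) : Prop :=
  EtaClosed η S ∧ (classOf η '' S).Finite

/-- A set is η-infinite iff it is a union of infinitely many η-equivalence classes. -/
def EtaInfinite (η : PosEq) (S : Set ℕ) : Prop :=
  EtaClosed η S ∧ (classOf η '' S).Infinite

/-- `f` is a one-one uniformly r.e. numbering of the class `C`:
`f` is computable, `i ↦ W_{f i}` is injective, and `C = {W_{f i} : i ∈ ℕ}`. -/
def OneOneNumbering (f : ℕ → ℕ) (C : Set (Set ℕ)) : Prop :=
  Computable f ∧ (∀ i j, W (f i) = W (f j) → i = j) ∧ C = Set.range fun i => W (f i)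

/-- An η-family: an (automatically infinite) class of η-closed r.e. sets
admitting a one-one uniformly r.e. numbering. -/
def EtaFamily (η : PosEq) (C : Set (Set ℕ)) : Prop :=
  (∀ L ∈ C, EtaClosed η L) ∧ ∃ f, OneOneNumbering f C

/-- `a η n` is the `n`-th (in ascending order) least representative of an
η-equivalence class. -/
noncomputable def a (η : PosEq) (n : ℕ) : ℕ := Nat.nth (fun x => ∀ y, η.rel x y → x ≤ y) n

/-- `A η n = [a_0] ∪ … ∪ [a_{n-1}]`. -/
def A (η : PosEq) (n : ℕ) : Set ℕ := {x | ∃ m < n, η.rel (a η m) x}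

/-- The ascending family `𝒜_η = {A_n : n ∈ ℕ}`. -/
def ascendingFamily (η : PosEq) : Set (Set ℕ) := Set.range (A η)

/-- A learner: a map from finite sequences over ℕ ∪ {#} (with `none` as the
pause symbol `#`) to hypotheses in ℕ ∪ {?} (with `none` as `?`). -/
abbrev Learner := List (Option ℕ) → Option ℕ

/-- The content of a text. -/
def cntT (T : ℕ → Option ℕ) : Set ℕ := {x | ∃ n, T n = some x}

/-- `T` is a text for `L`. -/
def IsText (T : ℕ → Option ℕ) (L : Set ℕ) : Prop := cntT T = L

/-- The initial segment `T[n] = T(0), …, T(n-1)`. -/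
def seg (T : ℕ → Option ℕ) (n : ℕ) : List (Option ℕ) := (List.range n).map T

/-- The content of a finite sequence. -/
def cntL (σ : List (Option ℕ)) : Set ℕ := {x | some x ∈ σ}

/-- Explanatory learning with hypotheses interpreted in hypothesis space `H`. -/
def ExLearnsIn (H : ℕ → Set ℕ) (M : Learner) (C : Set (Set ℕ)) : Prop :=
  ∀ L ∈ C, ∀ T, IsText T L →
    ∃ n e, M (seg T n) = some e ∧ H e = L ∧ ∀ j, n ≤ j → M (seg T j) = M (seg T n)

/-- Behaviourally correct learning with hypothesis space `H`. -/
def BCLearnsIn (H : ℕ → Set ℕ) (M : Learner) (C : Set (Set ℕ)) : Prop :=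
  ∀ L ∈ C, ∀ T, IsText T L →
    ∃ n, ∀ j, n ≤ j → ∃ e, M (seg T j) = some e ∧ H e = L

/-- Finite (one-shot) learning with hypothesis space `H`. -/
def FinLearnsIn (H : ℕ → Set ℕ) (M : Learner) (C : Set (Set ℕ)) : Prop :=
  ∀ L ∈ C, ∀ T, IsText T L →
    ∃ n e, M (seg T n) = some e ∧ H e = L ∧ (∀ m, m < n → M (seg T m) = none) ∧
      ∀ j, n ≤ j → M (seg T j) = M (seg T n)

/-- The sequence of hypotheses of `M` on text `T` converges. -/
def ConvergesOn (M : Learner) (T : ℕ → Option ℕ) : Prop :=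
  ∃ n, ∀ j, n ≤ j → M (seg T j) = M (seg T n)

/-- Confident learning with hypothesis space `H`: explanatory learning with
convergence on every text for every subset of ℕ. -/
def ConfLearnsIn (H : ℕ → Set ℕ) (M : Learner) (C : Set (Set ℕ)) : Prop :=
  ExLearnsIn H M C ∧ ∀ T, ConvergesOn M T

/-- Vacillatory learning with hypothesis space `H`. -/
def VacLearnsIn (H : ℕ → Set ℕ) (M : Learner) (C : Set (Set ℕ)) : Prop :=
  BCLearnsIn H M C ∧
    ∀ L ∈ C, ∀ T, IsText T L → {h : Option ℕ | ∃ n, 1 ≤ n ∧ M (seg T n) = h}.Finite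

/-- Weakly confident learning with hypothesis space `H`: explanatory learning
with convergence on every text consistent with the class. -/
def WConfLearnsIn (H : ℕ → Set ℕ) (M : Learner) (C : Set (Set ℕ)) : Prop :=
  ExLearnsIn H M C ∧ ∀ T, (∃ L ∈ C, cntT T ⊆ L) → ConvergesOn M T

def ExLearnable (C : Set (Set ℕ)) : Prop :=
  ∃ M : Learner, Computable M ∧ ExLearnsIn W M C

def BCLearnable (C : Set (Set ℕ)) : Prop :=
  ∃ M : Learner, Computable M ∧ BCLearnsIn W M C

def FinLearnable (C : Set (Set ℕ)) : Prop :=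
  ∃ M : Learner, Computable M ∧ FinLearnsIn W M C

def ConfLearnable (C : Set (Set ℕ)) : Prop :=
  ∃ M : Learner, Computable M ∧ ConfLearnsIn W M C

def VacLearnable (C : Set (Set ℕ)) : Prop :=
  ∃ M : Learner, Computable M ∧ VacLearnsIn W M C

def WConfLearnable (C : Set (Set ℕ)) : Prop :=
  ∃ M : Learner, Computable M ∧ WConfLearnsIn W M C


/-! ### Auxiliary material for statement 5 -/

lemma length_seg (T : ℕ → Option ℕ) (n : ℕ) : (seg T n).length = n := by simp [seg]

lemma seg_take (T : ℕ → Option ℕ) {k n : ℕ} (h : k ≤ n) : (seg T n).take k = seg T k := by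
  simp only [seg, ← List.map_take, List.take_range, Nat.min_eq_left h]

lemma cntL_seg_subset {T : ℕ → Option ℕ} {L : Set ℕ} (h : IsText T L) (n : ℕ) :
    cntL (seg T n) ⊆ L := by
  intro x hx
  obtain ⟨m, -, hm⟩ := List.mem_map.1 hx
  exact h ▸ ⟨m, hm⟩

lemma cntL_take_subset (σ : List (Option ℕ)) (k : ℕ) : cntL (σ.take k) ⊆ cntL σ :=
  fun _ hx => List.take_subset k σ hx

lemma exists_text (L : Set ℕ) : ∃ T, IsText T L := by
  rcases L.eq_empty_or_nonempty with h | h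
  · refine ⟨fun _ => none, ?_⟩
    unfold IsText cntT
    ext x; simp [h]
  · obtain ⟨g, hg⟩ := Set.Countable.exists_eq_range (Set.to_countable L) h
    refine ⟨fun n => some (g n), ?_⟩
    unfold IsText cntT
    ext x
    simp only [Set.mem_setOf_eq, Option.some.injEq, hg, Set.mem_range]

lemma exists_text_extending {σ : List (Option ℕ)} {L : Set ℕ} (hσ : cntL σ ⊆ L) :
    ∃ T, IsText T L ∧ ∀ k ≤ σ.length, seg T k = σ.take k := by
  obtain ⟨T₀, hT₀⟩ := exists_text L
  refine ⟨fun n => if h : n < σ.length then σ.get ⟨n, h⟩ else T₀ (n - σ.length), ?_, ?_⟩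
  · unfold IsText cntT
    ext x
    simp only [Set.mem_setOf_eq]
    constructor
    · rintro ⟨n, hn⟩
      by_cases h : n < σ.length
      · rw [dif_pos h] at hn
        exact hσ (show some x ∈ σ from hn ▸ List.get_mem σ ⟨n, h⟩)
      · rw [dif_neg h] at hn
        have hx0 : x ∈ cntT T₀ := by exact ⟨n - σ.length, hn⟩
        rw [← hT₀]
        exact hx0
    · intro hx
      obtain ⟨n, hn⟩ : x ∈ cntT T₀ := hT₀ ▸ hx
      refine ⟨n + σ.length, ?_⟩
      rw [dif_neg (by omega), Nat.add_sub_cancel]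
      exact hn
  · intro k hk
    apply List.ext_getElem
    · rw [length_seg, List.length_take]; omega
    · intro i h1 h2
      have hik : i < k := by rwa [length_seg] at h1
      have hil : i < σ.length := lt_of_lt_of_le hik hk
      simp only [seg]
      rw [List.getElem_map, List.getElem_range, List.getElem_take]
      rw [dif_pos hil]
      rfl

/-- `pref σ k` is the length-`k` prefix of `σ` (for `k ≤ σ.length`). -/
def pref (σ : List (Option ℕ)) (k : ℕ) : List (Option ℕ) := (List.range k).map σ.getI

lemma pref_seg (T : ℕ → Option ℕ) {k n : ℕ} (h : k ≤ n) : pref (seg T n) k = seg T k := by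
  unfold pref seg
  apply List.ext_getElem (by simp)
  intro i h1 h2
  simp only [List.length_map, List.length_range] at h1
  simp only [List.getElem_map, List.getElem_range]
  have hlt : i < (List.map T (List.range n)).length := by
    simp only [List.length_map, List.length_range]; omega
  rw [List.getI_eq_getElem _ hlt]
  simp only [List.getElem_map, List.getElem_range]

/-- The first hypothesis of `M` on the prefixes of length `≤ n` of `σ`. -/
def firstHyp (M : Learner) (σ : List (Option ℕ)) (n : ℕ) : Option ℕ :=
  Nat.rec (motive := fun _ => Option ℕ) (M (pref σ 0))
    (fun k ih => Option.casesOn (motive := fun _ => Option ℕ) ih (M (pref σ (k + 1))) some) n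

lemma firstHyp_succ (M : Learner) (σ : List (Option ℕ)) (n : ℕ) :
    firstHyp M σ (n + 1) =
      Option.casesOn (motive := fun _ => Option ℕ) (firstHyp M σ n)
        (M (pref σ (n + 1))) some := rfl

/-- The auxiliary one-one numbering. -/
def auxf (e₀ : ℕ) (f : ℕ → ℕ) : ℕ → ℕ := fun n => Nat.casesOn n e₀ f

lemma auxf_computable (e₀ : ℕ) {f : ℕ → ℕ} (hf : Computable f) : Computable (auxf e₀ f) :=
  Computable.nat_casesOn Computable.id (Computable.const e₀) ((hf.comp Computable.snd).to₂)

lemma firstHyp_none {M : Learner} {σ : List (Option ℕ)} {n : ℕ}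
    (h : ∀ k ≤ n, M (pref σ k) = none) : firstHyp M σ n = none := by
  induction n with
  | zero => exact h 0 le_rfl
  | succ n ih =>
    have h1 : firstHyp M σ n = none := ih fun k hk => h k (hk.trans (Nat.le_succ n))
    rw [firstHyp_succ, h1]
    exact h (n + 1) le_rfl

lemma firstHyp_some {M : Learner} {σ : List (Option ℕ)} {n k₀ : ℕ} {v : ℕ}
    (hk : k₀ ≤ n) (hv : M (pref σ k₀) = some v)
    (hmin : ∀ k, k < k₀ → M (pref σ k) = none) : firstHyp M σ n = some v := by
  induction n with
  | zero =>
    have : k₀ = 0 := Nat.le_zero.1 hk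
    subst this
    exact hv
  | succ n ih =>
    rcases Nat.lt_or_ge k₀ (n + 1) with h | h
    · have h1 := ih (Nat.lt_succ_iff.1 h)
      rw [firstHyp_succ, h1]
    · have hkn : k₀ = n + 1 := le_antisymm hk h
      subst hkn
      have h1 : firstHyp M σ n = none :=
        firstHyp_none fun k hkk => hmin k (Nat.lt_succ_of_le hkk)
      rw [firstHyp_succ, h1]
      exact hv

/-- The confident learner built from `M` with default hypothesis `e₀`. -/
def auxN (M : Learner) (e₀ : ℕ) : Learner :=
  fun σ => some ((firstHyp M σ σ.length).getD e₀)

lemma auxN_seg (M : Learner) (e₀ : ℕ) (T : ℕ → Option ℕ) (n : ℕ) :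
    auxN M e₀ (seg T n) = some ((firstHyp M (seg T n) n).getD e₀) := by
  simp [auxN, length_seg]

lemma pref_primrec : Primrec₂ pref :=
  Primrec.list_map (Primrec.list_range.comp Primrec.snd)
    (Primrec.list_getI.comp (Primrec.fst.comp Primrec.fst) Primrec.snd)

lemma auxN_computable {M : Learner} (hM : Computable M) (e₀ : ℕ) :
    Computable (auxN M e₀) := by
  have hpref : Computable₂ pref := pref_primrec.to_comp
  have hFH : Computable fun σ : List (Option ℕ) => firstHyp M σ σ.length := by
    have hh : Computable₂ fun (σ : List (Option ℕ)) (p : ℕ × Option ℕ) =>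
        Option.casesOn (motive := fun _ => Option ℕ) p.2 (M (pref σ (p.1 + 1))) some :=
      Computable.option_casesOn (Computable.snd.comp Computable.snd)
        (hM.comp (hpref.comp Computable.fst
          (Computable.succ.comp (Computable.fst.comp Computable.snd))))
        ((Computable.option_some.comp Computable.snd).to₂)
    exact Computable.nat_rec Computable.list_length
      (hM.comp (hpref.comp Computable.id (Computable.const 0))) hh
  exact Computable.option_some.comp
    (Computable.option_getD hFH (Computable.const e₀))

/-- No learner that finitely learns a class can learn two comparable distinct sets of it. -/
lemma finLearn_comparable {M₂ : Learner} {D : Set (Set ℕ)} (hM : FinLearnsIn W M₂ D)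
    {L L' : Set ℕ} (hL : L ∈ D) (hL' : L' ∈ D) (hsub : L ⊆ L') : L = L' := by
  obtain ⟨T, hT⟩ := exists_text L
  obtain ⟨n, e, h1, h2, _h3, _h4⟩ := hM L hL T hT
  have hcnt : cntL (seg T n) ⊆ L' := (cntL_seg_subset hT n).trans hsub
  obtain ⟨T', hT', hseg⟩ := exists_text_extending hcnt
  have hsegk : ∀ k ≤ n, seg T' k = seg T k := by
    intro k hk
    rw [hseg k (by rw [length_seg]; exact hk), seg_take T hk]
  obtain ⟨n', e', h1', h2', h3', h4'⟩ := hM L' hL' T' hT'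
  have hn'n : n' ≤ n := by
    by_contra hgt
    have := h3' n (lt_of_not_ge hgt)
    rw [hsegk n le_rfl, h1] at this
    cases this
  have heq := h4' n hn'n
  rw [hsegk n le_rfl, h1, h1'] at heq
  rw [← h2, ← h2']
  exact congrArg W (Option.some.inj heq)


/-- If at least one η-family is finitely learnable, then there is
an η-family that is confidently learnable but not finitely learnable. -/
theorem stmt5 (η : PosEq) (h : ∃ C : Set (Set ℕ), EtaFamily η C ∧ FinLearnable C) :
    ∃ C : Set (Set ℕ), EtaFamily η C ∧ ConfLearnable C ∧ ¬ FinLearnable C := by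
  classical
  obtain ⟨C₀, ⟨hclosed, f, hfcomp, hinj, hrange⟩, M, hMcomp, hMfin⟩ := h
  have hmem : ∀ j, W (f j) ∈ C₀ := fun j => hrange ▸ ⟨j, rfl⟩
  -- A code for `W (f 0) ∩ W (f 1)`
  have hb : Partrec fun x : ℕ => (evalCode (f 0) x).bind fun _ => evalCode (f 1) x := by
    have h0 : Partrec (evalCode (f 0)) :=
      Nat.Partrec.Code.eval_part.comp (Computable.const _) Computable.id
    have h1 : Partrec (evalCode (f 1)) :=
      Nat.Partrec.Code.eval_part.comp (Computable.const _) Computable.id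
    exact h0.bind ((h1.comp Computable.fst) : Partrec₂ fun (x _ : ℕ) => evalCode (f 1) x)
  obtain ⟨c, hc⟩ := Nat.Partrec.Code.exists_code.1 (Partrec.nat_iff.1 hb)
  set e₀ : ℕ := Encodable.encode c with he₀def
  have he₀ : ∀ x, evalCode e₀ x = (evalCode (f 0) x).bind fun _ => evalCode (f 1) x := by
    intro x
    show (Denumerable.ofNat Nat.Partrec.Code e₀).eval x = _
    rw [he₀def, Denumerable.ofNat_encode, hc]
  have hW : W e₀ = W (f 0) ∩ W (f 1) := by
    ext x
    simp only [W, Set.mem_setOf_eq, Set.mem_inter_iff, he₀, Part.bind_dom]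
    exact ⟨fun ⟨h1, h2⟩ => ⟨h1, h2⟩, fun ⟨h1, h2⟩ => ⟨h1, h2⟩⟩
  -- `M` never conjectures on data contained in `W (f 0) ∩ W (f 1)`
  have hNC : ∀ σ : List (Option ℕ), cntL σ ⊆ W (f 0) ∩ W (f 1) → M σ = none := by
    intro σ hσ
    by_contra hne0
    have hex : ∃ k, k ≤ σ.length ∧ M (σ.take k) ≠ none :=
      ⟨σ.length, le_rfl, by rwa [List.take_length]⟩
    set k₀ := Nat.find hex with hk₀def
    obtain ⟨hk₀len, hk₀ne⟩ := Nat.find_spec hex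
    have hmin : ∀ m, m < k₀ → M (σ.take m) = none := by
      intro m hm
      by_contra hc'
      exact Nat.find_min hex hm ⟨le_trans hm.le hk₀len, hc'⟩
    have key : ∀ i, cntL σ ⊆ W (f i) → ∃ e, M (σ.take k₀) = some e ∧ W e = W (f i) := by
      intro i hsub
      have hsubtake : cntL (σ.take k₀) ⊆ W (f i) :=
        fun x hx => hsub (cntL_take_subset σ k₀ hx)
      obtain ⟨T, hT, hseg⟩ := exists_text_extending hsubtake
      have hlen : (σ.take k₀).length = k₀ := by
        rw [List.length_take]; exact min_eq_left hk₀len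
      have hsegk : ∀ k ≤ k₀, seg T k = σ.take k := by
        intro k hk
        rw [hseg k (by rw [hlen]; exact hk), List.take_take, min_eq_left hk]
      obtain ⟨n, e, h1, h2, h3, h4⟩ := hMfin _ (hmem i) T hT
      have hnk : n ≤ k₀ := by
        by_contra hgt
        have := h3 k₀ (lt_of_not_ge hgt)
        rw [hsegk k₀ le_rfl] at this
        exact hk₀ne this
      have hn2 : ¬ n < k₀ := by
        intro hlt
        have := hmin n hlt
        rw [← hsegk n hnk] at this
        rw [h1] at this
        cases this
      have hnk₀ : n = k₀ := le_antisymm hnk (not_lt.1 hn2)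
      refine ⟨e, ?_, h2⟩
      rw [← hnk₀, ← hsegk n (hnk₀ ▸ le_rfl)]
      exact h1
    obtain ⟨ea, hea, hWa⟩ := key 0 fun x hx => (hσ hx).1
    obtain ⟨eb, heb, hWb⟩ := key 1 fun x hx => (hσ hx).2
    have heab : ea = eb := Option.some.inj (hea.symm.trans heb)
    have : W (f 0) = W (f 1) := by rw [← hWa, heab, hWb]
    exact Nat.zero_ne_one (hinj 0 1 this)
  -- `W e₀` is distinct from every `W (f j)`
  have hne : ∀ j, W (f j) ≠ W e₀ := by
    intro j heq
    obtain ⟨T, hT⟩ := exists_text (W (f j))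
    obtain ⟨n, e, h1, -, -, -⟩ := hMfin _ (hmem j) T hT
    have hc' : cntL (seg T n) ⊆ W (f 0) ∩ W (f 1) := by
      rw [← hW, ← heq]; exact cntL_seg_subset hT n
    rw [hNC _ hc'] at h1
    cases h1
  -- the new family
  refine ⟨Set.range fun i => W (auxf e₀ f i), ⟨?_, auxf e₀ f, ?_, ?_, rfl⟩, ?_, ?_⟩
  · -- all members are η-closed
    rintro L ⟨i, rfl⟩
    cases i with
    | zero =>
      show EtaClosed η (W e₀)
      rw [hW]
      intro x hx y hy
      exact ⟨hclosed _ (hmem 0) x hx.1 hy, hclosed _ (hmem 1) x hx.2 hy⟩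
    | succ i => exact hclosed _ (hmem i)
  · -- f' computable
    exact auxf_computable e₀ hfcomp
  · -- f' one-one
    intro i j hij
    match i, j with
    | 0, 0 => rfl
    | 0, j + 1 => exact absurd hij.symm (hne j)
    | i + 1, 0 => exact absurd hij (hne i)
    | i + 1, j + 1 => exact congrArg Nat.succ (hinj i j hij)
  · -- confidently learnable
    refine ⟨auxN M e₀, auxN_computable hMcomp e₀, ?_, ?_⟩
    · -- explanatory learning
      rintro L ⟨i, rfl⟩ T hT
      cases i with
      | zero =>
        have hall : ∀ n, auxN M e₀ (seg T n) = some e₀ := by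
          intro n
          rw [auxN_seg, firstHyp_none, Option.getD_none]
          intro k hk
          rw [pref_seg T hk]
          exact hNC _ (by rw [← hW]; exact cntL_seg_subset hT k)
        exact ⟨0, e₀, hall 0, rfl, fun j _ => (hall j).trans (hall 0).symm⟩
      | succ i =>
        obtain ⟨n, e, h1, h2, h3, _h4⟩ := hMfin _ (hmem i) T hT
        have hge : ∀ m, n ≤ m → auxN M e₀ (seg T m) = some e := by
          intro m hm
          have hv' : M (pref (seg T m) n) = some e := by
            rw [pref_seg T hm]; exact h1
          have hmin' : ∀ k, k < n → M (pref (seg T m) k) = none := by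
            intro k hk
            rw [pref_seg T (le_trans hk.le hm)]
            exact h3 k hk
          rw [auxN_seg, firstHyp_some hm hv' hmin', Option.getD_some]
        exact ⟨n, e, hge n le_rfl, h2, fun j hj => (hge j hj).trans (hge n le_rfl).symm⟩
    · -- convergence on every text
      intro T
      by_cases hE : ∃ k, M (seg T k) ≠ none
      · set k₀ := Nat.find hE with hk₀def
        obtain ⟨v, hv⟩ := Option.ne_none_iff_exists'.1 (Nat.find_spec hE)
        have hge : ∀ m, k₀ ≤ m → auxN M e₀ (seg T m) = some v := by
          intro m hm
          have hv' : M (pref (seg T m) k₀) = some v := by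
            rw [pref_seg T hm]; exact hv
          have hmin' : ∀ k, k < k₀ → M (pref (seg T m) k) = none := by
            intro k hk
            rw [pref_seg T (le_trans hk.le hm)]
            exact not_not.1 (Nat.find_min hE hk)
          rw [auxN_seg, firstHyp_some hm hv' hmin', Option.getD_some]
        exact ⟨k₀, fun j hj => (hge j hj).trans (hge k₀ le_rfl).symm⟩
      · push_neg at hE
        have hall : ∀ n, auxN M e₀ (seg T n) = some e₀ := by
          intro n
          rw [auxN_seg, firstHyp_none, Option.getD_none]
          intro k hk
          rw [pref_seg T hk]
          exact hE k
        exact ⟨0, fun j _ => (hall j).trans (hall 0).symm⟩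
  · -- not finitely learnable
    rintro ⟨M₂, -, hM₂⟩
    have hI : W e₀ ∈ Set.range fun i => W (auxf e₀ f i) := ⟨0, rfl⟩
    have hB : W (f 0) ∈ Set.range fun i => W (auxf e₀ f i) := ⟨1, rfl⟩
    have hsub : W e₀ ⊆ W (f 0) := by rw [hW]; exact Set.inter_subset_left
    exact hne 0 (finLearn_comparable hM₂ hI hB hsub).symm

end PEL
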